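/- Let A, B, C be n×n matrices over the nonnegative reals with Tr(C) ≤ 1, and let α, β > 0. Then Tr(α^{-1}A ⊕ β^{-1}B ⊕ C) ≤ 1 if and only if α ≥ max(λ, σ) and β ≥ max(μ, θ, G(α)). -/

import Mathlib

open scoped NNReal

/-- Square matrices over the max-times semifield of nonnegative reals. -/
abbrev TMat (n : ℕ) := Matrix (Fin n) (Fin n) ℝ≥0

/-- Tropical (max-times) matrix product. -/
noncomputable def tmul {n : ℕ} (A B : TMat n) : TMat n :=
  fun i j => Finset.univ.sup fun k => A i k * B k j

/-- Tropical (max-times) matrix-vector product. -/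
noncomputable def tmulVec {n : ℕ} (A : TMat n) (x : Fin n → ℝ≥0) : Fin n → ℝ≥0 :=
  fun i => Finset.univ.sup fun j => A i j * x j

/-- Tropical identity matrix. -/
noncomputable def tId (n : ℕ) : TMat n := fun i j => if i = j then 1 else 0

/-- Tropical matrix powers. -/
noncomputable def tpow {n : ℕ} (A : TMat n) : ℕ → TMat n
  | 0 => tId n
  | k + 1 => tmul A (tpow A k)

/-- Tropical (entrywise max) matrix addition. -/
noncomputable def tadd {n : ℕ} (A B : TMat n) : TMat n := fun i j => A i j ⊔ B i j

/-- Entrywise scalar multiplication. -/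
noncomputable def tsmul {n : ℕ} (a : ℝ≥0) (A : TMat n) : TMat n := fun i j => a * A i j

/-- Tropical trace: tr A = max_i a_{ii}. -/
noncomputable def ttr {n : ℕ} (A : TMat n) : ℝ≥0 := Finset.univ.sup fun i => A i i

/-- Tropical "determinant": Tr(A) = max_{k=1..n} tr(A^k). -/
noncomputable def tTr {n : ℕ} (A : TMat n) : ℝ≥0 :=
  (Finset.Icc 1 n).sup fun k => ttr (tpow A k)

/-- Kleene star: entrywise max of A^0, ..., A^{n-1}. -/
noncomputable def tstar {n : ℕ} (A : TMat n) : TMat n :=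
  fun i j => (Finset.range n).sup fun k => tpow A k i j

/-- Tropical product of a finite chain of matrices F 0 ⊗ F 1 ⊗ ⋯ ⊗ F (k-1). -/
noncomputable def tchain {n : ℕ} : (k : ℕ) → (Fin k → TMat n) → TMat n
  | 0, _ => tId n
  | k + 1, F => tmul (F 0) (tchain k fun t => F t.succ)

/-- Tuples of k nonnegative integers with sum m. -/
def tuples (k m : ℕ) : Finset (Fin k → Fin (m + 1)) :=
  Finset.univ.filter fun f => (∑ t, (f t : ℕ)) = m

/-- Tuples of k integers from {0,1} with sum l. -/
def binTuples (k l : ℕ) : Finset (Fin k → Fin 2) :=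
  Finset.univ.filter fun j => (∑ t, (j t : ℕ)) = l

/-- The objective f_M(x) = max_{i,j} m_{ij} x_j / x_i. -/
noncomputable def fobj {n : ℕ} (M : TMat n) (x : Fin n → ℝ≥0) : ℝ≥0 :=
  Finset.univ.sup fun p : Fin n × Fin n => M p.1 p.2 * x p.2 / x p.1

/-- Spectral radius: λ = max_{k=1..n} (tr(A^k))^{1/k}. -/
noncomputable def specRad {n : ℕ} (A : TMat n) : ℝ≥0 :=
  (Finset.Icc 1 n).sup fun k => ttr (tpow A k) ^ ((1 : ℝ) / k)

/-- σ = max over k=1..n-1, m=1..n-k and tuples (i_1,…,i_k) with sum m of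
    (tr(A^{i_1} C ⋯ A^{i_k} C))^{1/m}. -/
noncomputable def sigmaC {n : ℕ} (A C : TMat n) : ℝ≥0 :=
  (Finset.Icc 1 (n - 1)).sup fun k =>
    (Finset.Icc 1 (n - k)).sup fun m =>
      (tuples k m).sup fun f =>
        ttr (tchain k fun t => tmul (tpow A (f t : ℕ)) C) ^ ((1 : ℝ) / m)

/-- r_{k,l,m} = max over tuples (i_1,…,i_k) with sum m and (j_1,…,j_k) ∈ {0,1}^k with
    sum l of tr(A^{i_1} B^{j_1} C^{1-j_1} ⋯ A^{i_k} B^{j_k} C^{1-j_k}). -/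
noncomputable def rklm {n : ℕ} (A B C : TMat n) (k l m : ℕ) : ℝ≥0 :=
  (tuples k m).sup fun f =>
    (binTuples k l).sup fun j =>
      ttr (tchain k fun t =>
        tmul (tpow A (f t : ℕ)) (tmul (tpow B (j t : ℕ)) (tpow C (1 - (j t : ℕ)))))

/-- G(s) = max_{k,m,l} r_{k,l,m}^{1/l} s^{-m/l}. -/
noncomputable def Gfun {n : ℕ} (A B C : TMat n) (s : ℝ≥0) : ℝ≥0 :=
  (Finset.Icc 1 (n - 1)).sup fun k =>
    (Finset.Icc 1 (n - k)).sup fun m =>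
      (Finset.Icc 1 k).sup fun l =>
        rklm A B C k l m ^ ((1 : ℝ) / l) * s ^ (-(m : ℝ) / l)

/-- H(t) = max_{k,m,l} r_{k,l,m}^{1/m} t^{-l/m}. -/
noncomputable def Hfun {n : ℕ} (A B C : TMat n) (t : ℝ≥0) : ℝ≥0 :=
  (Finset.Icc 1 (n - 1)).sup fun k =>
    (Finset.Icc 1 (n - k)).sup fun m =>
      (Finset.Icc 1 k).sup fun l =>
        rklm A B C k l m ^ ((1 : ℝ) / m) * t ^ (-(l : ℝ) / m)

/-- Unconstrained r_{k,m} = max over tuples (i_1,…,i_k) with sum m of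
    tr(A^{i_1} B ⋯ A^{i_k} B). -/
noncomputable def rkm {n : ℕ} (A B : TMat n) (k m : ℕ) : ℝ≥0 :=
  (tuples k m).sup fun f => ttr (tchain k fun t => tmul (tpow A (f t : ℕ)) B)

/-- Unconstrained G(s) = max_{k,m} r_{k,m}^{1/k} s^{-m/k}. -/
noncomputable def Gfun0 {n : ℕ} (A B : TMat n) (s : ℝ≥0) : ℝ≥0 :=
  (Finset.Icc 1 (n - 1)).sup fun k =>
    (Finset.Icc 1 (n - k)).sup fun m =>
      rkm A B k m ^ ((1 : ℝ) / k) * s ^ (-(m : ℝ) / k)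

/-- Unconstrained H(t) = max_{k,m} r_{k,m}^{1/m} t^{-k/m}. -/
noncomputable def Hfun0 {n : ℕ} (A B : TMat n) (t : ℝ≥0) : ℝ≥0 :=
  (Finset.Icc 1 (n - 1)).sup fun k =>
    (Finset.Icc 1 (n - k)).sup fun m =>
      rkm A B k m ^ ((1 : ℝ) / m) * t ^ (-(k : ℝ) / m)

/-- Pareto-minimal points of a set V ⊆ ℝ≥0 × ℝ≥0. -/
def ParetoMin (V : Set (ℝ≥0 × ℝ≥0)) (p : ℝ≥0 × ℝ≥0) : Prop :=
  p ∈ V ∧ ¬∃ q ∈ V, q.1 ≤ p.1 ∧ q.2 ≤ p.2 ∧ q ≠ p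

namespace TropAux
open Finset List

lemma mul_sup' {ι : Type*} (s : Finset ι) (f : ι → ℝ≥0) (c : ℝ≥0) :
    c * s.sup f = s.sup fun i => c * f i :=
  Finset.comp_sup_eq_sup_comp (c * ·) (fun x y => mul_max c x y) (mul_zero c)

lemma sup_mul' {ι : Type*} (s : Finset ι) (f : ι → ℝ≥0) (c : ℝ≥0) :
    s.sup f * c = s.sup fun i => f i * c :=
  Finset.comp_sup_eq_sup_comp (· * c) (fun x y => by simpa [mul_comm] using mul_max c x y)
    (zero_mul c)

lemma tmul_assoc {n : ℕ} (A B C : TMat n) : tmul (tmul A B) C = tmul A (tmul B C) := by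
  funext i j
  simp only [tmul, sup_mul', mul_sup', mul_assoc]
  exact Finset.sup_comm _ _ _

lemma tId_tmul {n : ℕ} (A : TMat n) : tmul (tId n) A = A := by
  funext i j
  simp only [tmul]
  refine le_antisymm (Finset.sup_le fun k _ => ?_) ?_
  · by_cases h : i = k <;> simp [tId, h]
  · simpa [tId] using Finset.le_sup (f := fun k => tId n i k * A k j) (Finset.mem_univ i)

lemma tmul_tId {n : ℕ} (A : TMat n) : tmul A (tId n) = A := by
  funext i j
  simp only [tmul]
  refine le_antisymm (Finset.sup_le fun k _ => ?_) ?_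
  · by_cases h : k = j <;> simp [tId, h]
  · simpa [tId] using Finset.le_sup (f := fun k => A i k * tId n k j) (Finset.mem_univ j)

lemma ttr_tmul_comm {n : ℕ} (X Y : TMat n) : ttr (tmul X Y) = ttr (tmul Y X) := by
  simp only [ttr, tmul]
  rw [Finset.sup_comm]
  exact Finset.sup_congr rfl fun k _ => Finset.sup_congr rfl fun i _ => mul_comm _ _

noncomputable def lchain {n : ℕ} : List (TMat n) → TMat n
  | [] => tId n
  | X :: L => tmul X (lchain L)

lemma lchain_nil {n : ℕ} : lchain ([] : List (TMat n)) = tId n := rfl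
lemma lchain_cons {n : ℕ} (X : TMat n) (L : List (TMat n)) :
    lchain (X :: L) = tmul X (lchain L) := rfl

lemma lchain_append {n : ℕ} (L1 L2 : List (TMat n)) :
    lchain (L1 ++ L2) = tmul (lchain L1) (lchain L2) := by
  induction L1 with
  | nil => simp [lchain_nil, tId_tmul]
  | cons X L ih => simp [lchain_cons, ih, tmul_assoc]

lemma ttr_lchain_rot {n : ℕ} (L1 L2 : List (TMat n)) :
    ttr (lchain (L1 ++ L2)) = ttr (lchain (L2 ++ L1)) := by
  rw [lchain_append, lchain_append, ttr_tmul_comm]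

lemma tpow_eq_lchain {n : ℕ} (A : TMat n) (k : ℕ) :
    tpow A k = lchain (List.replicate k A) := by
  induction k with
  | zero => rfl
  | succ k ih => simp [tpow, List.replicate_succ, lchain_cons, ih]

lemma tchain_eq_lchain {n : ℕ} (k : ℕ) (F : Fin k → TMat n) :
    tchain k F = lchain (List.ofFn F) := by
  induction k with
  | zero => rfl
  | succ k ih => simp [tchain, List.ofFn_succ, lchain_cons, ih]

lemma tsmul_one' {n : ℕ} (A : TMat n) : tsmul 1 A = A := by
  funext i j; simp [tsmul]

lemma tsmul_tsmul {n : ℕ} (a b : ℝ≥0) (A : TMat n) :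
    tsmul a (tsmul b A) = tsmul (a * b) A := by
  funext i j; simp [tsmul, mul_assoc]

lemma tsmul_tmul {n : ℕ} (c : ℝ≥0) (A B : TMat n) :
    tmul (tsmul c A) B = tsmul c (tmul A B) := by
  funext i j; simp only [tmul, tsmul, mul_sup', mul_assoc]

lemma tmul_tsmul {n : ℕ} (c : ℝ≥0) (A B : TMat n) :
    tmul A (tsmul c B) = tsmul c (tmul A B) := by
  funext i j; simp only [tmul, tsmul, mul_sup', mul_left_comm]

lemma ttr_tsmul {n : ℕ} (c : ℝ≥0) (A : TMat n) : ttr (tsmul c A) = c * ttr A := by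
  simp only [ttr, tsmul, mul_sup']

lemma lchain_scaled {n : ℕ} (cf : Fin 3 → ℝ≥0) (N : Fin 3 → TMat n) (u : List (Fin 3)) :
    lchain (u.map fun v => tsmul (cf v) (N v)) =
      tsmul ((u.map cf).prod) (lchain (u.map N)) := by
  induction u with
  | nil => simp [lchain_nil, tsmul_one']
  | cons v u ih =>
      simp [lchain_cons, ih, tsmul_tmul, tmul_tsmul, tsmul_tsmul, mul_comm]

lemma sup_fin3 (f : Fin 3 → ℝ≥0) : Finset.univ.sup f = f 0 ⊔ f 1 ⊔ f 2 := by
  refine le_antisymm (Finset.sup_le fun v _ => ?_) ?_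
  · fin_cases v
    · exact le_sup_of_le_left (le_sup_of_le_left le_rfl)
    · exact le_sup_of_le_left (le_sup_of_le_right le_rfl)
    · exact le_sup_of_le_right le_rfl
  · exact sup_le (sup_le (Finset.le_sup (Finset.mem_univ _)) (Finset.le_sup (Finset.mem_univ _)))
      (Finset.le_sup (Finset.mem_univ _))

lemma inv_mul_le_one_iff (s x : ℝ≥0) (hs : s ≠ 0) : s⁻¹ * x ≤ 1 ↔ x ≤ s := by
  constructor
  · intro h
    calc x = s * (s⁻¹ * x) := by rw [← mul_assoc, mul_inv_cancel₀ hs, one_mul]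
    _ ≤ s * 1 := mul_le_mul_of_nonneg_left h zero_le
    _ = s := mul_one s
  · intro h
    calc s⁻¹ * x ≤ s⁻¹ * s := mul_le_mul_of_nonneg_left h zero_le
    _ = 1 := inv_mul_cancel₀ hs

lemma pow_root_le_iff {x z : ℝ≥0} {l : ℕ} (hl : 0 < l) :
    x ^ ((1:ℝ)/l) ≤ z ↔ x ≤ z ^ l := by
  rw [one_div, NNReal.rpow_inv_le_iff (by exact_mod_cast hl), NNReal.rpow_natCast]

lemma Gterm_iff (x α β : ℝ≥0) (hα : α ≠ 0) (m l : ℕ) (hl : 0 < l) :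
    x ^ ((1:ℝ)/l) * α ^ (-(m:ℝ)/l) ≤ β ↔ x ≤ α ^ m * β ^ l := by
  have hl' : (0:ℝ) < l := by exact_mod_cast hl
  have hαp : 0 < α ^ ((m:ℝ)/l) := NNReal.rpow_pos (pos_iff_ne_zero.mpr hα)
  rw [neg_div, NNReal.rpow_neg, ← div_eq_mul_inv, div_le_iff₀ hαp, one_div,
    NNReal.rpow_inv_le_iff hl', NNReal.mul_rpow, ← NNReal.rpow_mul,
    div_mul_cancel₀ (m:ℝ) (ne_of_gt hl'), NNReal.rpow_natCast, NNReal.rpow_natCast, mul_comm]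

def flat (z : Fin 3) : List (ℕ × Fin 3) → List (Fin 3)
  | [] => []
  | (i, x) :: L => List.replicate i z ++ x :: flat z L

lemma flat_cons (z : Fin 3) (p : ℕ × Fin 3) (L : List (ℕ × Fin 3)) :
    flat z (p :: L) = List.replicate p.1 z ++ p.2 :: flat z L := by
  cases p; rfl

lemma decomp (z : Fin 3) (u : List (Fin 3)) :
    ∃ (L : List (ℕ × Fin 3)) (t : ℕ),
      u = flat z L ++ List.replicate t z ∧ ∀ p ∈ L, p.2 ≠ z := by
  induction u with
  | nil => exact ⟨[], 0, rfl, by simp⟩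
  | cons x u ih =>
    obtain ⟨L, t, hu, hL⟩ := ih
    by_cases hx : x = z
    · cases L with
      | nil =>
          refine ⟨[], t + 1, ?_, by simp⟩
          simp only [flat, List.nil_append] at hu ⊢
          rw [hu, hx, List.replicate_succ]
      | cons p L' =>
          refine ⟨(p.1 + 1, p.2) :: L', t, ?_, ?_⟩
          · rw [hu, hx, flat_cons, flat_cons]
            simp [List.replicate_succ]
          · intro q hq
            rcases List.mem_cons.mp hq with h | h
            · subst h; exact hL p (List.mem_cons_self)
            · exact hL q (List.mem_cons_of_mem _ h)
    · refine ⟨(0, x) :: L, t, ?_, ?_⟩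
      · rw [hu, flat_cons]; simp
      · intro q hq
        rcases List.mem_cons.mp hq with h | h
        · subst h; exact hx
        · exact hL q h

lemma mem_flat (z : Fin 3) (L : List (ℕ × Fin 3)) (p : ℕ × Fin 3) (hp : p ∈ L) :
    p.2 ∈ flat z L := by
  induction L with
  | nil => cases hp
  | cons q L ih =>
    rw [flat_cons]
    rcases List.mem_cons.mp hp with h | h
    · subst h; exact List.mem_append_right _ (List.mem_cons_self)
    · exact List.mem_append_right _ (List.mem_cons_of_mem _ (ih h))

lemma flat_absorb (z : Fin 3) (t : ℕ) (p : ℕ × Fin 3) (L : List (ℕ × Fin 3)) :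
    List.replicate t z ++ flat z (p :: L) = flat z ((t + p.1, p.2) :: L) := by
  rw [flat_cons, flat_cons]
  simp only [List.replicate_add, List.append_assoc]

lemma count_flat_self (z : Fin 3) {k : ℕ} (g : Fin k → ℕ × Fin 3)
    (hg : ∀ t, (g t).2 ≠ z) :
    (flat z (List.ofFn g)).count z = ∑ t, (g t).1 := by
  induction k with
  | zero => simp [flat]
  | succ k ih =>
    rw [List.ofFn_succ, flat_cons, Fin.sum_univ_succ]
    simp only [List.count_append, List.count_replicate, List.count_cons]
    rw [ih (fun t => g t.succ) (fun t => hg t.succ)]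
    have : ¬ ((g 0).2 = z) := hg 0
    simp [this]

lemma count_flat_ne (z y : Fin 3) (hy : y ≠ z) {k : ℕ} (g : Fin k → ℕ × Fin 3) :
    (flat z (List.ofFn g)).count y = ∑ t, if (g t).2 = y then 1 else 0 := by
  induction k with
  | zero => simp [flat]
  | succ k ih =>
    rw [List.ofFn_succ, flat_cons, Fin.sum_univ_succ]
    simp only [List.count_append, List.count_replicate, List.count_cons]
    rw [ih (fun t => g t.succ)]
    have : ¬ (z = y) := fun h => hy h.symm
    simp [this]
    omega

lemma length_flat (z : Fin 3) {k : ℕ} (g : Fin k → ℕ × Fin 3) :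
    (flat z (List.ofFn g)).length = (∑ t, (g t).1) + k := by
  induction k with
  | zero => simp [flat]
  | succ k ih =>
    rw [List.ofFn_succ, flat_cons, Fin.sum_univ_succ]
    simp only [List.length_append, List.length_replicate, List.length_cons]
    rw [ih (fun t => g t.succ)]
    omega

lemma lchain_flat_ofFn {n : ℕ} (N : Fin 3 → TMat n) (z : Fin 3) {k : ℕ}
    (g : Fin k → ℕ × Fin 3) :
    lchain ((flat z (List.ofFn g)).map N) =
      tchain k fun t => tmul (tpow (N z) (g t).1) (N (g t).2) := by
  induction k with
  | zero => simp [flat, lchain_nil, tchain]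
  | succ k ih =>
    rw [List.ofFn_succ, flat_cons]
    rw [List.map_append, lchain_append, List.map_cons, lchain_cons, List.map_replicate,
      ← tpow_eq_lchain, ih (fun t => g t.succ)]
    show _ = tmul _ (tchain k _)
    rw [← tmul_assoc]

lemma tpow_sup_expand {n : ℕ} (E : Fin 3 → TMat n) (D : TMat n)
    (hD : ∀ i j, D i j = Finset.univ.sup fun v => E v i j) (k : ℕ) (i j : Fin n) :
    tpow D k i j = Finset.univ.sup fun w : Fin k → Fin 3 =>
      lchain (List.ofFn fun t : Fin k => E (w t)) i j := by
  induction k generalizing i j with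
  | zero =>
    have h : (fun w : Fin 0 → Fin 3 => lchain (List.ofFn fun t => E (w t)) i j) =
        fun _ => tId n i j := by
      funext w; simp [List.ofFn_zero, lchain_nil]
    rw [h, Finset.sup_const Finset.univ_nonempty]
    rfl
  | succ k ih =>
    have e1 : (Finset.univ.sup fun w : Fin (k+1) → Fin 3 =>
          lchain (List.ofFn fun t => E (w t)) i j) =
        Finset.univ.sup fun w : Fin (k+1) → Fin 3 =>
          Finset.univ.sup fun p => E (w 0) i p * lchain (List.ofFn fun t => E (w t.succ)) p j := by
      refine Finset.sup_congr rfl fun w _ => ?_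
      rw [List.ofFn_succ, lchain_cons]
      rfl
    rw [e1, Finset.sup_comm]
    show Finset.univ.sup (fun p => D i p * tpow D k p j) = _
    refine Finset.sup_congr rfl fun p _ => ?_
    rw [hD i p, ih, sup_mul']
    have e2 : (fun v => E v i p * Finset.univ.sup fun w : Fin k → Fin 3 =>
          lchain (List.ofFn fun t => E (w t)) p j) =
        fun v => Finset.univ.sup fun w : Fin k → Fin 3 =>
          E v i p * lchain (List.ofFn fun t => E (w t)) p j := by
      funext v; rw [mul_sup']
    rw [e2]
    refine le_antisymm (Finset.sup_le fun v _ => Finset.sup_le fun w' _ => ?_)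
      (Finset.sup_le fun w _ => ?_)
    · have := Finset.le_sup (f := fun w : Fin (k+1) → Fin 3 =>
          E (w 0) i p * lchain (List.ofFn fun t => E (w t.succ)) p j)
        (Finset.mem_univ (Fin.cons v w'))
      simpa [Fin.cons_zero, Fin.cons_succ] using this
    · refine le_trans ?_ (Finset.le_sup (Finset.mem_univ (w 0)))
      exact Finset.le_sup (f := fun w' : Fin k → Fin 3 =>
        E (w 0) i p * lchain (List.ofFn fun t => E (w' t)) p j)
        (Finset.mem_univ (fun t : Fin k => w t.succ))

lemma ttr_tpow_sup {n : ℕ} (E : Fin 3 → TMat n) (D : TMat n)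
    (hD : ∀ i j, D i j = Finset.univ.sup fun v => E v i j) (k : ℕ) :
    ttr (tpow D k) = Finset.univ.sup fun w : Fin k → Fin 3 =>
      ttr (lchain (List.ofFn fun t => E (w t))) := by
  simp only [ttr]
  have : (fun i => tpow D k i i) = fun i => Finset.univ.sup fun w : Fin k → Fin 3 =>
      lchain (List.ofFn fun t => E (w t)) i i := by
    funext i; exact tpow_sup_expand E D hD k i i
  rw [this, Finset.sup_comm]

noncomputable def Nfun {n : ℕ} (A B C : TMat n) : Fin 3 → TMat n :=
  fun v => if v = 0 then A else if v = 1 then B else C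

noncomputable def cfun (α β : ℝ≥0) : Fin 3 → ℝ≥0 :=
  fun v => if v = 0 then α⁻¹ else if v = 1 then β⁻¹ else 1

lemma count3 (u : List (Fin 3)) : u.count 0 + u.count 1 + u.count 2 = u.length := by
  induction u with
  | nil => simp
  | cons x u ih =>
    simp only [List.count_cons, List.length_cons]
    fin_cases x <;> simp <;> omega

lemma Nblock' {n : ℕ} (A B C : TMat n) (x : Fin 3) (hx0 : x ≠ 0) :
    Nfun A B C x = tmul (tpow B (if x = 1 then 1 else 0))
      (tpow C (1 - (if x = 1 then 1 else 0))) := by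
  fin_cases x
  · exact absurd rfl hx0
  · show Nfun A B C 1 = tmul (tpow B 1) (tpow C 0)
    show B = tmul (tmul B (tId n)) (tId n)
    rw [tmul_tId, tmul_tId]
  · show Nfun A B C 2 = tmul (tpow B 0) (tpow C 1)
    show C = tmul (tId n) (tmul C (tId n))
    rw [tId_tmul, tmul_tId]

lemma rot_decomp {n : ℕ} (N : Fin 3 → TMat n) (z : Fin 3) (u : List (Fin 3))
    (hne : ∃ x ∈ u, x ≠ z) :
    ∃ (k : ℕ) (g : Fin k → ℕ × Fin 3), 0 < k ∧ (∀ t, (g t).2 ≠ z) ∧ (∀ t, (g t).2 ∈ u) ∧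
      ttr (lchain (u.map N)) = ttr (lchain ((flat z (List.ofFn g)).map N)) ∧
      (∀ y, (flat z (List.ofFn g)).count y = u.count y) ∧
      (flat z (List.ofFn g)).length = u.length := by
  obtain ⟨L, t, hu, hL⟩ := decomp z u
  cases L with
  | nil =>
    exfalso
    obtain ⟨x, hxu, hxz⟩ := hne
    rw [hu] at hxu
    simp only [flat, List.nil_append] at hxu
    exact hxz (List.eq_of_mem_replicate hxu)
  | cons p L' =>
    set L₂ : List (ℕ × Fin 3) := (t + p.1, p.2) :: L' with hL₂
    have hsnd : ∀ q ∈ L₂, q.2 ≠ z := by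
      intro q hq
      rcases List.mem_cons.mp hq with h | h
      · subst h; exact hL p (List.mem_cons_self)
      · exact hL q (List.mem_cons_of_mem _ h)
    have hmem : ∀ q ∈ L₂, q.2 ∈ u := by
      intro q hq
      rw [hu]
      refine List.mem_append_left _ ?_
      rcases List.mem_cons.mp hq with h | h
      · subst h; exact mem_flat z _ p (List.mem_cons_self)
      · exact mem_flat z _ q (List.mem_cons_of_mem _ h)
    have hflat : flat z L₂ = List.replicate t z ++ flat z (p :: L') := by
      rw [hL₂, ← flat_absorb]
    have hofn : List.ofFn L₂.get = L₂ := List.ofFn_get L₂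
    refine ⟨L₂.length, L₂.get, by simp [hL₂], ?_, ?_, ?_, ?_, ?_⟩
    · intro s; exact hsnd _ (List.get_mem L₂ s)
    · intro s; exact hmem _ (List.get_mem L₂ s)
    · rw [hofn, hu, hflat, List.map_append, List.map_append, ttr_lchain_rot]
    · intro y; rw [hofn, hu, hflat, List.count_append, List.count_append, Nat.add_comm]
    · rw [hofn, hu, hflat, List.length_append, List.length_append, Nat.add_comm]

lemma master {n : ℕ} (A B C : TMat n) (α β : ℝ≥0) (hα : α ≠ 0) (hβ : β ≠ 0) :
    tTr (tadd (tadd (tsmul α⁻¹ A) (tsmul β⁻¹ B)) C) ≤ 1 ↔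
      ∀ u : List (Fin 3), 1 ≤ u.length → u.length ≤ n →
        ttr (lchain (u.map (Nfun A B C))) ≤ α ^ u.count 0 * β ^ u.count 1 := by
  set N := Nfun A B C with hN
  set cf := cfun α β with hcf
  set E : Fin 3 → TMat n := fun v => tsmul (cf v) (N v) with hE
  set D := tadd (tadd (tsmul α⁻¹ A) (tsmul β⁻¹ B)) C with hDdef
  have hD : ∀ i j, D i j = Finset.univ.sup fun v => E v i j := by
    intro i j
    rw [sup_fin3]
    show (α⁻¹ * A i j ⊔ β⁻¹ * B i j) ⊔ C i j = _
    show _ = (cf 0 * N 0 i j ⊔ cf 1 * N 1 i j) ⊔ cf 2 * N 2 i j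
    show _ = (α⁻¹ * A i j ⊔ β⁻¹ * B i j) ⊔ 1 * C i j
    rw [one_mul]
  have hprod : ∀ u : List (Fin 3),
      (u.map cf).prod = α⁻¹ ^ u.count 0 * β⁻¹ ^ u.count 1 := by
    intro u
    induction u with
    | nil => simp
    | cons v u ih =>
      rw [List.map_cons, List.prod_cons, ih, List.count_cons, List.count_cons]
      fin_cases v
      · show α⁻¹ * _ = _
        simp [pow_succ]
        ring
      · show β⁻¹ * _ = _
        simp [pow_succ]
        ring
      · show (1:ℝ≥0) * _ = _
        simp
  have key : ∀ u : List (Fin 3),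
      (ttr (lchain (u.map E)) ≤ 1 ↔
        ttr (lchain (u.map N)) ≤ α ^ u.count 0 * β ^ u.count 1) := by
    intro u
    rw [hE, lchain_scaled, ttr_tsmul, hprod u]
    have hs : (α ^ u.count 0 * β ^ u.count 1) ≠ 0 := by positivity
    rw [show α⁻¹ ^ u.count 0 * β⁻¹ ^ u.count 1 = (α ^ u.count 0 * β ^ u.count 1)⁻¹ by
      rw [mul_inv, inv_pow, inv_pow]]
    exact inv_mul_le_one_iff _ _ hs
  constructor
  · intro h u h1 h2
    rw [← key u]
    have h' : (Finset.Icc 1 n).sup (fun k => ttr (tpow D k)) ≤ 1 := h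
    have hk : ttr (tpow D u.length) ≤ 1 :=
      le_trans (Finset.le_sup (f := fun k => ttr (tpow D k))
        (Finset.mem_Icc.mpr ⟨h1, h2⟩)) h'
    rw [ttr_tpow_sup E D hD] at hk
    have h3 := le_trans (Finset.le_sup
      (f := fun w : Fin u.length → Fin 3 => ttr (lchain (List.ofFn fun t => E (w t))))
      (Finset.mem_univ u.get)) hk
    have he : (List.ofFn fun t => E (u.get t)) = u.map E := by
      rw [show (List.ofFn fun t => E (u.get t)) = List.map E (List.ofFn u.get) from
        by rw [List.map_ofFn]; rfl, List.ofFn_get]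
    have h4 : ttr (lchain (List.ofFn fun t => E (u.get t))) ≤ 1 := h3
    rw [he] at h4
    exact h4
  · intro h
    show (Finset.Icc 1 n).sup (fun k => ttr (tpow D k)) ≤ 1
    refine Finset.sup_le fun k hk => ?_
    obtain ⟨hk1, hk2⟩ := Finset.mem_Icc.mp hk
    rw [ttr_tpow_sup E D hD]
    refine Finset.sup_le fun w _ => ?_
    have hu := h (List.ofFn w) (by simpa using hk1) (by simpa using hk2)
    rw [← key] at hu
    rw [List.map_ofFn] at hu
    exact hu

end TropAux

set_option maxHeartbeats 2000000 in
open TropAux in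
/-- With Tr(C) ≤ 1 and α, β > 0: Tr(α⁻¹A ⊕ β⁻¹B ⊕ C) ≤ 1 iff
α ≥ max(λ, σ) and β ≥ max(μ, θ, G(α)). -/
theorem stmt11 {n : ℕ} (A B C : TMat n) (hC : tTr C ≤ 1)
    (α β : ℝ≥0) (hα : 0 < α) (hβ : 0 < β) :
    tTr (tadd (tadd (tsmul α⁻¹ A) (tsmul β⁻¹ B)) C) ≤ 1 ↔
      (specRad A ⊔ sigmaC A C ≤ α ∧ specRad B ⊔ sigmaC B C ⊔ Gfun A B C α ≤ β) := by
  have hNb : ∀ v : Fin 2, Nfun A B C (if v = 1 then (1:Fin 3) else 2)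
      = tmul (tpow B (v:ℕ)) (tpow C (1 - (v:ℕ))) := by
    intro v; fin_cases v
    · show Nfun A B C 2 = tmul (tpow B 0) (tpow C 1)
      show C = tmul (tId n) (tmul C (tId n))
      rw [tId_tmul, tmul_tId]
    · show Nfun A B C 1 = tmul (tpow B 1) (tpow C 0)
      show B = tmul (tmul B (tId n)) (tId n)
      rw [tmul_tId, tmul_tId]
  have fin3two : ∀ x : Fin 3, x ≠ 0 → x ≠ 1 → x = 2 := by decide
  rw [master A B C α β hα.ne' hβ.ne']
  constructor
  · intro h
    refine ⟨sup_le ?_ ?_, sup_le (sup_le ?_ ?_) ?_⟩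
    · -- specRad A ≤ α
      refine Finset.sup_le fun k hk => ?_
      obtain ⟨hk1, hk2⟩ := Finset.mem_Icc.mp hk
      have hu := h (List.replicate k 0) (by simpa) (by simpa)
      rw [List.map_replicate, ← tpow_eq_lchain,
        show (List.replicate k (0:Fin 3)).count 0 = k by simp [List.count_replicate],
        show (List.replicate k (0:Fin 3)).count 1 = 0 by simp [List.count_replicate], pow_zero, mul_one] at hu
      exact (pow_root_le_iff hk1).mpr hu
    · -- sigmaC A C ≤ α
      refine Finset.sup_le fun k hk => Finset.sup_le fun m hm => Finset.sup_le fun f hf => ?_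
      obtain ⟨hk1, hk2⟩ := Finset.mem_Icc.mp hk
      obtain ⟨hm1, hm2⟩ := Finset.mem_Icc.mp hm
      have hsum : (∑ t, ((f t : ℕ))) = m := (Finset.mem_filter.mp hf).2
      have hlen : (flat 0 (List.ofFn (fun t => ((f t :ℕ), (2:Fin 3))))).length = m + k := by
        rw [length_flat]; exact congrArg (fun x => x + k) hsum
      have hc0 : (flat 0 (List.ofFn (fun t => ((f t :ℕ), (2:Fin 3))))).count 0 = m :=
        (count_flat_self 0 (fun t => ((f t :ℕ), (2:Fin 3)))
          (fun t => (by decide : (2:Fin 3) ≠ 0))).trans hsum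
      have hc1 : (flat 0 (List.ofFn (fun t => ((f t :ℕ), (2:Fin 3))))).count 1 = 0 :=
        (count_flat_ne 0 1 (by decide) _).trans (by simp)
      have hu := h (flat 0 (List.ofFn (fun t => ((f t :ℕ), (2:Fin 3)))))
        (by omega) (by omega)
      rw [hc0, hc1, pow_zero, mul_one, lchain_flat_ofFn] at hu
      exact (pow_root_le_iff hm1).mpr hu
    · -- specRad B ≤ β
      refine Finset.sup_le fun k hk => ?_
      obtain ⟨hk1, hk2⟩ := Finset.mem_Icc.mp hk
      have hu := h (List.replicate k 1) (by simpa) (by simpa)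
      rw [List.map_replicate, ← tpow_eq_lchain,
        show (List.replicate k (1:Fin 3)).count 0 = 0 by simp [List.count_replicate],
        show (List.replicate k (1:Fin 3)).count 1 = k by simp [List.count_replicate], pow_zero, one_mul] at hu
      exact (pow_root_le_iff hk1).mpr hu
    · -- sigmaC B C ≤ β
      refine Finset.sup_le fun k hk => Finset.sup_le fun m hm => Finset.sup_le fun f hf => ?_
      obtain ⟨hk1, hk2⟩ := Finset.mem_Icc.mp hk
      obtain ⟨hm1, hm2⟩ := Finset.mem_Icc.mp hm
      have hsum : (∑ t, ((f t : ℕ))) = m := (Finset.mem_filter.mp hf).2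
      have hlen : (flat 1 (List.ofFn (fun t => ((f t :ℕ), (2:Fin 3))))).length = m + k := by
        rw [length_flat]; exact congrArg (fun x => x + k) hsum
      have hc1 : (flat 1 (List.ofFn (fun t => ((f t :ℕ), (2:Fin 3))))).count 1 = m :=
        (count_flat_self 1 (fun t => ((f t :ℕ), (2:Fin 3)))
          (fun t => (by decide : (2:Fin 3) ≠ 1))).trans hsum
      have hc0 : (flat 1 (List.ofFn (fun t => ((f t :ℕ), (2:Fin 3))))).count 0 = 0 :=
        (count_flat_ne 1 0 (by decide) _).trans (by simp)
      have hu := h (flat 1 (List.ofFn (fun t => ((f t :ℕ), (2:Fin 3)))))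
        (by omega) (by omega)
      rw [hc0, hc1, pow_zero, one_mul, lchain_flat_ofFn] at hu
      exact (pow_root_le_iff hm1).mpr hu
    · -- Gfun A B C α ≤ β
      refine Finset.sup_le fun k hk => Finset.sup_le fun m hm => Finset.sup_le fun l hl => ?_
      obtain ⟨hk1, hk2⟩ := Finset.mem_Icc.mp hk
      obtain ⟨hm1, hm2⟩ := Finset.mem_Icc.mp hm
      obtain ⟨hl1, hl2⟩ := Finset.mem_Icc.mp hl
      rw [Gterm_iff _ _ _ hα.ne' m l hl1]
      show ((tuples k m).sup fun f => (binTuples k l).sup fun j =>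
        ttr (tchain k fun t => tmul (tpow A (f t : ℕ))
          (tmul (tpow B (j t : ℕ)) (tpow C (1 - (j t : ℕ)))))) ≤ α ^ m * β ^ l
      refine Finset.sup_le fun f hf => Finset.sup_le fun j hj => ?_
      have hsum : (∑ t, ((f t : ℕ))) = m := (Finset.mem_filter.mp hf).2
      have hsumj : (∑ t, ((j t : ℕ))) = l := (Finset.mem_filter.mp hj).2
      have hlen : (flat 0 (List.ofFn (fun t => ((f t :ℕ),
          if j t = 1 then (1:Fin 3) else 2)))).length = m + k := by
        rw [length_flat]; exact congrArg (fun x => x + k) hsum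
      have hc0 : (flat 0 (List.ofFn (fun t => ((f t :ℕ),
          if j t = 1 then (1:Fin 3) else 2)))).count 0 = m :=
        (count_flat_self 0 (fun t => ((f t :ℕ), if j t = 1 then (1:Fin 3) else 2))
          (fun t => by dsimp only; split <;> decide)).trans hsum
      have hc1 : (flat 0 (List.ofFn (fun t => ((f t :ℕ),
          if j t = 1 then (1:Fin 3) else 2)))).count 1 = l := by
        refine (count_flat_ne 0 1 (by decide) _).trans ?_
        refine Eq.trans ?_ hsumj
        refine Finset.sum_congr rfl fun t _ => ?_
        exact (by decide : ∀ v : Fin 2,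
          (if (if v = 1 then (1:Fin 3) else 2) = 1 then 1 else 0 : ℕ) = (v : ℕ)) (j t)
      have hchain : lchain ((flat 0 (List.ofFn (fun t => ((f t :ℕ),
            if j t = 1 then (1:Fin 3) else 2)))).map (Nfun A B C)) =
          tchain k fun t => tmul (tpow A (f t : ℕ))
            (tmul (tpow B (j t : ℕ)) (tpow C (1 - (j t : ℕ)))) := by
        rw [lchain_flat_ofFn]
        refine congrArg (tchain k) (funext fun t => ?_)
        show tmul (tpow (Nfun A B C 0) (f t : ℕ))
          (Nfun A B C (if j t = 1 then (1:Fin 3) else 2)) = _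
        rw [hNb (j t)]
        rfl
      have hu := h (flat 0 (List.ofFn (fun t => ((f t :ℕ),
        if j t = 1 then (1:Fin 3) else 2)))) (by omega) (by omega)
      rw [hc0, hc1, hchain] at hu
      exact hu
  · rintro ⟨hA, hB⟩
    rw [sup_le_iff] at hA
    rw [sup_le_iff, sup_le_iff] at hB
    obtain ⟨hA1, hA2⟩ := hA
    obtain ⟨⟨hB1, hB2⟩, hG⟩ := hB
    intro u h1 h2
    have habc := count3 u
    by_cases hb : u.count 1 = 0
    · by_cases hcc : u.count 2 = 0
      · -- all zeros
        have hall : ∀ x ∈ u, x = (0:Fin 3) := by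
          intro x hx
          fin_cases x
          · rfl
          · exact absurd hx (List.count_eq_zero.mp hb)
          · exact absurd hx (List.count_eq_zero.mp hcc)
        obtain ⟨L0, hL0⟩ : ∃ L0, u = List.replicate L0 0 :=
          ⟨u.length, List.eq_replicate_of_mem hall⟩
        subst hL0
        simp only [List.length_replicate] at h1 h2
        rw [List.map_replicate, ← tpow_eq_lchain,
          show (List.replicate L0 (0:Fin 3)).count 0 = L0 by simp [List.count_replicate],
          show (List.replicate L0 (0:Fin 3)).count 1 = 0 by simp [List.count_replicate], pow_zero, mul_one]
        have hsp : ttr (tpow A L0) ^ ((1:ℝ)/L0) ≤ specRad A :=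
          Finset.le_sup (f := fun k => ttr (tpow A k) ^ ((1:ℝ)/k))
            (Finset.mem_Icc.mpr ⟨h1, h2⟩)
        exact (pow_root_le_iff h1).mp (le_trans hsp hA1)
      · by_cases hac : u.count 0 = 0
        · -- all twos
          have hall : ∀ x ∈ u, x = (2:Fin 3) := by
            intro x hx
            fin_cases x
            · exact absurd hx (List.count_eq_zero.mp hac)
            · exact absurd hx (List.count_eq_zero.mp hb)
            · rfl
          obtain ⟨L0, hL0⟩ : ∃ L0, u = List.replicate L0 2 :=
            ⟨u.length, List.eq_replicate_of_mem hall⟩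
          subst hL0
          simp only [List.length_replicate] at h1 h2
          rw [List.map_replicate, ← tpow_eq_lchain,
            show (List.replicate L0 (2:Fin 3)).count 0 = 0 by simp [List.count_replicate],
            show (List.replicate L0 (2:Fin 3)).count 1 = 0 by simp [List.count_replicate], pow_zero, pow_zero, mul_one]
          have hsp : ttr (tpow C L0) ≤ tTr C :=
            Finset.le_sup (f := fun k => ttr (tpow C k)) (Finset.mem_Icc.mpr ⟨h1, h2⟩)
          exact le_trans hsp hC
        · -- a ≥ 1, b = 0, c ≥ 1 : sigmaC A C
          have hne : ∃ x ∈ u, x ≠ (0:Fin 3) :=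
            ⟨2, List.count_pos_iff.mp (Nat.pos_of_ne_zero hcc), by decide⟩
          obtain ⟨k, g, hk, hg2, hgu, htr, hcnt, hlenf⟩ := rot_decomp (Nfun A B C) 0 u hne
          have hg1 : ∀ t, (g t).2 ≠ 1 := fun t hh =>
            (List.count_eq_zero.mp hb) (hh ▸ hgu t)
          have hg22 : ∀ t, (g t).2 = 2 := fun t => fin3two _ (hg2 t) (hg1 t)
          have hma : (∑ t, (g t).1) = u.count 0 := by
            rw [← count_flat_self 0 g hg2, hcnt 0]
          have hm1 : 1 ≤ ∑ t, (g t).1 := hma ▸ Nat.pos_of_ne_zero hac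
          have hlen2 : (∑ t, (g t).1) + k = u.length := (length_flat 0 g).symm.trans hlenf
          set m := ∑ t, (g t).1 with hm
          set f : Fin k → Fin (m+1) := fun t => ⟨(g t).1, Nat.lt_succ_of_le
            (Finset.single_le_sum (f := fun t => (g t).1)
              (fun i _ => Nat.zero_le _) (Finset.mem_univ t))⟩ with hfdef
          have hf : f ∈ tuples k m := Finset.mem_filter.mpr ⟨Finset.mem_univ _, hm.symm⟩
          have hchain : lchain ((flat 0 (List.ofFn g)).map (Nfun A B C)) =
              tchain k (fun t => tmul (tpow A ((f t):ℕ)) C) := by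
            rw [lchain_flat_ofFn]
            refine congrArg (tchain k) (funext fun t => ?_)
            rw [hg22 t]
            rfl
          have hkmem : k ∈ Finset.Icc 1 (n-1) := Finset.mem_Icc.mpr ⟨hk, by omega⟩
          have hmmem : m ∈ Finset.Icc 1 (n-k) := Finset.mem_Icc.mpr ⟨hm1, by omega⟩
          have e1 := Finset.le_sup (f := fun f' : Fin k → Fin (m+1) =>
              ttr (tchain k fun t => tmul (tpow A ((f' t):ℕ)) C) ^ ((1:ℝ)/m)) hf
          have e2 := Finset.le_sup (f := fun m' => (tuples k m').sup fun f' =>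
              ttr (tchain k fun t => tmul (tpow A ((f' t):ℕ)) C) ^ ((1:ℝ)/m')) hmmem
          have e3 : _ ≤ sigmaC A C := Finset.le_sup
            (f := fun k' => (Finset.Icc 1 (n-k')).sup fun m' =>
              (tuples k' m').sup fun f' =>
                ttr (tchain k' fun t => tmul (tpow A ((f' t):ℕ)) C) ^ ((1:ℝ)/m')) hkmem
          have hsig : ttr (tchain k fun t => tmul (tpow A ((f t):ℕ)) C) ≤ α ^ m :=
            (pow_root_le_iff hm1).mp (le_trans (le_trans e1 e2) (le_trans e3 hA2))
          rw [htr, hchain, hb, pow_zero, mul_one, ← hma]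
          exact hsig
    · by_cases hac : u.count 0 = 0
      · by_cases hcc : u.count 2 = 0
        · -- all ones : specRad B
          have hall : ∀ x ∈ u, x = (1:Fin 3) := by
            intro x hx
            fin_cases x
            · exact absurd hx (List.count_eq_zero.mp hac)
            · rfl
            · exact absurd hx (List.count_eq_zero.mp hcc)
          obtain ⟨L0, hL0⟩ : ∃ L0, u = List.replicate L0 1 :=
            ⟨u.length, List.eq_replicate_of_mem hall⟩
          subst hL0
          simp only [List.length_replicate] at h1 h2
          rw [List.map_replicate, ← tpow_eq_lchain,
            show (List.replicate L0 (1:Fin 3)).count 0 = 0 by simp [List.count_replicate],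
            show (List.replicate L0 (1:Fin 3)).count 1 = L0 by simp [List.count_replicate],
            pow_zero, one_mul]
          have hsp : ttr (tpow B L0) ^ ((1:ℝ)/L0) ≤ specRad B :=
            Finset.le_sup (f := fun k => ttr (tpow B k) ^ ((1:ℝ)/k))
              (Finset.mem_Icc.mpr ⟨h1, h2⟩)
          exact (pow_root_le_iff h1).mp (le_trans hsp hB1)
        · -- a = 0, b ≥ 1, c ≥ 1 : sigmaC B C
          have hne : ∃ x ∈ u, x ≠ (1:Fin 3) :=
            ⟨2, List.count_pos_iff.mp (Nat.pos_of_ne_zero hcc), by decide⟩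
          obtain ⟨k, g, hk, hg2, hgu, htr, hcnt, hlenf⟩ := rot_decomp (Nfun A B C) 1 u hne
          have hg0 : ∀ t, (g t).2 ≠ 0 := fun t hh =>
            (List.count_eq_zero.mp hac) (hh ▸ hgu t)
          have hg22 : ∀ t, (g t).2 = 2 := fun t => fin3two _ (hg0 t) (hg2 t)
          have hma : (∑ t, (g t).1) = u.count 1 := by
            rw [← count_flat_self 1 g hg2, hcnt 1]
          have hm1 : 1 ≤ ∑ t, (g t).1 := hma ▸ Nat.pos_of_ne_zero hb
          have hlen2 : (∑ t, (g t).1) + k = u.length := (length_flat 1 g).symm.trans hlenf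
          set m := ∑ t, (g t).1 with hm
          set f : Fin k → Fin (m+1) := fun t => ⟨(g t).1, Nat.lt_succ_of_le
            (Finset.single_le_sum (f := fun t => (g t).1)
              (fun i _ => Nat.zero_le _) (Finset.mem_univ t))⟩ with hfdef
          have hf : f ∈ tuples k m := Finset.mem_filter.mpr ⟨Finset.mem_univ _, hm.symm⟩
          have hchain : lchain ((flat 1 (List.ofFn g)).map (Nfun A B C)) =
              tchain k (fun t => tmul (tpow B ((f t):ℕ)) C) := by
            rw [lchain_flat_ofFn]
            refine congrArg (tchain k) (funext fun t => ?_)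
            rw [hg22 t]
            rfl
          have hkmem : k ∈ Finset.Icc 1 (n-1) := Finset.mem_Icc.mpr ⟨hk, by omega⟩
          have hmmem : m ∈ Finset.Icc 1 (n-k) := Finset.mem_Icc.mpr ⟨hm1, by omega⟩
          have e1 := Finset.le_sup (f := fun f' : Fin k → Fin (m+1) =>
              ttr (tchain k fun t => tmul (tpow B ((f' t):ℕ)) C) ^ ((1:ℝ)/m)) hf
          have e2 := Finset.le_sup (f := fun m' => (tuples k m').sup fun f' =>
              ttr (tchain k fun t => tmul (tpow B ((f' t):ℕ)) C) ^ ((1:ℝ)/m')) hmmem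
          have e3 : _ ≤ sigmaC B C := Finset.le_sup
            (f := fun k' => (Finset.Icc 1 (n-k')).sup fun m' =>
              (tuples k' m').sup fun f' =>
                ttr (tchain k' fun t => tmul (tpow B ((f' t):ℕ)) C) ^ ((1:ℝ)/m')) hkmem
          have hsig : ttr (tchain k fun t => tmul (tpow B ((f t):ℕ)) C) ≤ β ^ m :=
            (pow_root_le_iff hm1).mp (le_trans (le_trans e1 e2) (le_trans e3 hB2))
          rw [htr, hchain, hac, pow_zero, one_mul, ← hma]
          exact hsig
      · -- a ≥ 1, b ≥ 1 : Gfun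
        have hne : ∃ x ∈ u, x ≠ (0:Fin 3) :=
          ⟨1, List.count_pos_iff.mp (Nat.pos_of_ne_zero hb), by decide⟩
        obtain ⟨k, g, hk, hg2, hgu, htr, hcnt, hlenf⟩ := rot_decomp (Nfun A B C) 0 u hne
        have hma : (∑ t, (g t).1) = u.count 0 := by
          rw [← count_flat_self 0 g hg2, hcnt 0]
        have hm1 : 1 ≤ ∑ t, (g t).1 := hma ▸ Nat.pos_of_ne_zero hac
        have hlen2 : (∑ t, (g t).1) + k = u.length := (length_flat 0 g).symm.trans hlenf
        set m := ∑ t, (g t).1 with hm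
        set f : Fin k → Fin (m+1) := fun t => ⟨(g t).1, Nat.lt_succ_of_le
          (Finset.single_le_sum (f := fun t => (g t).1)
            (fun i _ => Nat.zero_le _) (Finset.mem_univ t))⟩ with hfdef
        have hf : f ∈ tuples k m := Finset.mem_filter.mpr ⟨Finset.mem_univ _, hm.symm⟩
        have hlsum : (∑ t, if (g t).2 = 1 then 1 else 0 : ℕ) = u.count 1 := by
          rw [← count_flat_ne 0 1 (by decide) g, hcnt 1]
        have hl1 : 1 ≤ u.count 1 := Nat.pos_of_ne_zero hb
        have hlk : u.count 1 ≤ k := by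
          rw [← hlsum]
          calc (∑ t, if (g t).2 = 1 then 1 else 0 : ℕ) ≤ ∑ _t : Fin k, 1 :=
                Finset.sum_le_sum (fun t _ => by split <;> omega)
          _ = k := by simp
        have hjsum : (∑ t, (((if (g t).2 = 1 then (1:Fin 2) else 0) : Fin 2) : ℕ))
            = u.count 1 :=
          Eq.trans (Finset.sum_congr rfl fun t _ => by split <;> rfl) hlsum
        have hj : (fun t => if (g t).2 = 1 then (1:Fin 2) else 0) ∈ binTuples k (u.count 1) :=
          Finset.mem_filter.mpr ⟨Finset.mem_univ _, hjsum⟩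
        have h2eq : ∀ t : Fin k,
            (if (if (g t).2 = 1 then (1:Fin 2) else 0) = 1 then (1:Fin 3) else 2) = (g t).2 := by
          intro t
          by_cases h12 : (g t).2 = 1
          · simp [h12]
          · rw [fin3two _ (hg2 t) h12]; simp
        have hchain : lchain ((flat 0 (List.ofFn g)).map (Nfun A B C)) =
            tchain k (fun t => tmul (tpow A ((f t):ℕ))
              (tmul (tpow B (Fin.val (if (g t).2 = 1 then (1:Fin 2) else 0)))
                (tpow C (1 - Fin.val (if (g t).2 = 1 then (1:Fin 2) else 0))))) := by
          rw [lchain_flat_ofFn]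
          refine congrArg (tchain k) (funext fun t => ?_)
          beta_reduce
          rw [← hNb (if (g t).2 = 1 then (1:Fin 2) else 0), h2eq t]
          rfl
        have hkmem : k ∈ Finset.Icc 1 (n-1) := Finset.mem_Icc.mpr ⟨hk, by omega⟩
        have hmmem : m ∈ Finset.Icc 1 (n-k) := Finset.mem_Icc.mpr ⟨hm1, by omega⟩
        have hlmem : u.count 1 ∈ Finset.Icc 1 k := Finset.mem_Icc.mpr ⟨hl1, hlk⟩
        have e0 := Finset.le_sup (f := fun j' : Fin k → Fin 2 =>
            ttr (tchain k fun t => tmul (tpow A ((f t):ℕ))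
              (tmul (tpow B ((j' t):ℕ)) (tpow C (1 - ((j' t):ℕ)))))) hj
        have e1 : _ ≤ rklm A B C k (u.count 1) m := Finset.le_sup
          (f := fun f' : Fin k → Fin (m+1) => (binTuples k (u.count 1)).sup fun j' =>
            ttr (tchain k fun t => tmul (tpow A ((f' t):ℕ))
              (tmul (tpow B ((j' t):ℕ)) (tpow C (1 - ((j' t):ℕ)))))) hf
        have q1 := Finset.le_sup (f := fun l' =>
          rklm A B C k l' m ^ ((1:ℝ)/l') * α ^ (-(m:ℝ)/l')) hlmem
        have q2 := Finset.le_sup (f := fun m' => (Finset.Icc 1 k).sup fun l' =>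
            rklm A B C k l' m' ^ ((1:ℝ)/l') * α ^ (-(m':ℝ)/l')) hmmem
        have q3 : _ ≤ Gfun A B C α := Finset.le_sup
          (f := fun k' => (Finset.Icc 1 (n-k')).sup fun m' =>
            (Finset.Icc 1 k').sup fun l' =>
              rklm A B C k' l' m' ^ ((1:ℝ)/l') * α ^ (-(m':ℝ)/l')) hkmem
        have hrk : rklm A B C k (u.count 1) m ≤ α ^ m * β ^ (u.count 1) :=
          (Gterm_iff _ _ _ hα.ne' m (u.count 1) hl1).mp
            (le_trans q1 (le_trans q2 (le_trans q3 hG)))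
        rw [htr, hchain, ← hma]
        exact le_trans (le_trans e0 e1) hrk
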